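/- Let G be a finite simple graph in which every vertex has degree 1 or degree 3, and such that every connected component of G contains at least one vertex of degree 3. Then the number of vertices of degree 1 is at most 3 times the number of vertices of degree 3. Equivalently, writing N for the number of degree-1 vertices and I for the number of degree-3 vertices, the degree d° = (N+I)/2 satisfies I ≥ d°/2. -/

import Mathlib

/-- If every vertex of a finite simple graph has degree 1 or degree 3, and
every connected component contains at least one degree-3 (trivalent) vertex,
then the number of degree-1 (univalent) vertices is at most 3 times the
number of degree-3 vertices (equivalently, `I ≥ d°/2` where
`d° = (N + I)/2`). -/
theorem univalent_le_three_mul_trivalent {V : Type*} [Fintype V]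
    (G : SimpleGraph V) [DecidableRel G.Adj]
    (hdeg : ∀ v : V, G.degree v = 1 ∨ G.degree v = 3)
    (hcomp : ∀ v : V, ∃ w : V, G.Reachable v w ∧ G.degree w = 3) :
    (Finset.univ.filter fun v : V => G.degree v = 1).card ≤
      3 * (Finset.univ.filter fun v : V => G.degree v = 3).card := by
  classical
  -- pick a trivalent root in each connected component
  have hroot : ∀ c : G.ConnectedComponent,
      ∃ w : V, G.connectedComponentMk w = c ∧ G.degree w = 3 := by
    intro c
    obtain ⟨v, hv⟩ := c.exists_rep
    obtain ⟨w, hvw, hw⟩ := hcomp v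
    refine ⟨w, ?_, hw⟩
    rw [← hv]
    exact SimpleGraph.ConnectedComponent.eq.mpr hvw.symm
  choose root hroot1 hroot3 using hroot
  set R : Finset V := Finset.univ.image (fun u => root (G.connectedComponentMk u)) with hR
  -- the roots are trivalent
  have hRsub : R ⊆ Finset.univ.filter fun v : V => G.degree v = 3 := by
    intro x hx
    simp only [hR, Finset.mem_image] at hx
    obtain ⟨u, -, rfl⟩ := hx
    simp [hroot3]
  -- every non-root vertex has a neighbor strictly closer to its root
  have key : ∀ v : V, v ∉ R → ∃ w : V, G.Adj v w ∧
      G.dist w (root (G.connectedComponentMk v)) + 1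
        = G.dist v (root (G.connectedComponentMk v)) := by
    intro v hv
    set r := root (G.connectedComponentMk v) with hr
    clear_value r
    have hrR : r ∈ R := by
      simp only [hR, Finset.mem_image]
      exact ⟨v, Finset.mem_univ v, hr.symm⟩
    have hne : v ≠ r := fun h => hv (h ▸ hrR)
    have hreach : G.Reachable v r := by
      rw [hr]
      exact (SimpleGraph.ConnectedComponent.eq.mp (hroot1 (G.connectedComponentMk v))).symm
    have hpos : 0 < G.dist v r := hreach.pos_dist_of_ne hne
    obtain ⟨p, hp⟩ := hreach.exists_walk_length_eq_dist
    cases p with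
    | nil => simp at hpos
    | @cons _ w _ h q =>
      refine ⟨w, h, ?_⟩
      have h1 : G.dist w r ≤ q.length := G.dist_le q
      obtain ⟨q', hq'⟩ := q.reachable.exists_walk_length_eq_dist
      have h2 : G.dist v r ≤ (q'.cons h).length := G.dist_le _
      simp only [SimpleGraph.Walk.length_cons] at hp h2
      omega
  choose w hw1 hw2 using key
  -- injective map from non-root vertices to edges
  have hinj : (Finset.univ \ R).card ≤ G.edgeFinset.card := by
    have := Finset.card_le_card_of_injOn
      (f := fun v : V => if hv : v ∈ R then s(v, v) else s(v, w v hv))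
      (s := Finset.univ \ R) (t := G.edgeFinset) ?_ ?_
    · exact this
    · intro v hv
      have hv' : v ∉ R := by simpa using hv
      simp only [dif_neg hv']
      rw [Finset.mem_coe, SimpleGraph.mem_edgeFinset, SimpleGraph.mem_edgeSet]
      exact hw1 v _
    · intro a ha b hb hab
      have ha' : a ∉ R := by simpa using ha
      have hb' : b ∉ R := by simpa using hb
      simp only [dif_neg ha', dif_neg hb'] at hab
      rw [Sym2.eq_iff] at hab
      rcases hab with ⟨rfl, -⟩ | ⟨h1, h2⟩
      · rfl
      · exfalso
        have hadj : G.Adj a b := h2 ▸ hw1 a ha'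
        have hcc : G.connectedComponentMk a = G.connectedComponentMk b :=
          SimpleGraph.ConnectedComponent.eq.mpr hadj.reachable
        have e1 := hw2 a ha'
        have e2 := hw2 b hb'
        rw [h2] at e1
        rw [← h1, ← hcc] at e2
        omega
  -- counting
  have hRcard : R.card ≤ (Finset.univ.filter fun v : V => G.degree v = 3).card :=
    Finset.card_le_card hRsub
  have hsplit : ((Finset.univ \ R).card) + R.card = Fintype.card V := by
    rw [Finset.card_sdiff_add_card_eq_card (Finset.subset_univ R), Finset.card_univ]
  have hfilter : (Finset.univ.filter fun v : V => ¬ G.degree v = 1)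
      = Finset.univ.filter fun v : V => G.degree v = 3 := by
    ext v
    simp only [Finset.mem_filter, Finset.mem_univ, true_and]
    rcases hdeg v with h | h <;> simp [h]
  have hpart : (Finset.univ.filter fun v : V => G.degree v = 1).card
      + (Finset.univ.filter fun v : V => G.degree v = 3).card = Fintype.card V := by
    rw [← hfilter, Finset.card_filter_add_card_filter_not, Finset.card_univ]
  -- handshake
  have hsum : (Finset.univ.filter fun v : V => G.degree v = 1).card
      + 3 * (Finset.univ.filter fun v : V => G.degree v = 3).card
      = 2 * G.edgeFinset.card := by
    rw [← G.sum_degrees_eq_twice_card_edges,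
      ← Finset.sum_filter_add_sum_filter_not Finset.univ (fun v : V => G.degree v = 1)]
    rw [hfilter]
    congr 1
    · rw [Finset.sum_congr rfl (fun v hv => (Finset.mem_filter.mp hv).2),
        Finset.sum_const, smul_eq_mul, mul_one]
    · rw [Finset.sum_congr rfl (fun v hv => (Finset.mem_filter.mp hv).2),
        Finset.sum_const, smul_eq_mul, mul_comm]
  omega
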